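/- Pair compression with disjoint classes commutes with substitution on non-crossing occurrences: let h be the homomorphism performing \Gamma_1\Gamma_2-pair compression. If for a word u with variables and a solution S every occurrence of a factor ab (a \in \Gamma_1, b \in \Gamma_2) in S(u) lies entirely within the image of a single variable or entirely within explicit letters of u, then h(S(u)) = S'(h(u)) where S'(x) = h(S(x)) and h(u) compresses only the explicit letters of u. -/

import Mathlib

/-- The word associated to a single symbol of `u`: an explicit letter stands for
itself, a variable for its image under the substitution `S`. -/
def seg {σ V : Type*} (S : V → List σ) : σ ⊕ V → List σ
  | Sum.inl a => [a]
  | Sum.inr x => S x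

/-- Homomorphic application of a substitution. -/
def subst {σ V : Type*} (S : V → List σ) (u : List (σ ⊕ V)) : List σ :=
  (u.map (seg S)).flatten

/-- Pair compression on words: replace every occurrence of a factor `ab` with
`a ∈ Γ₁`, `b ∈ Γ₂` by the fresh letter `c a b`. -/
def pc {σ : Type*} [DecidableEq σ] (Γ1 Γ2 : Finset σ) (c : σ → σ → σ) : List σ → List σ
  | [] => []
  | [a] => [a]
  | a :: b :: l =>
    if a ∈ Γ1 ∧ b ∈ Γ2 then c a b :: pc Γ1 Γ2 c l
    else a :: pc Γ1 Γ2 c (b :: l)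

/-- Pair compression performed only on the explicit letters of a word with variables. -/
def pcE {σ V : Type*} [DecidableEq σ] (Γ1 Γ2 : Finset σ) (c : σ → σ → σ) :
    List (σ ⊕ V) → List (σ ⊕ V)
  | [] => []
  | Sum.inl a :: Sum.inl b :: l =>
    if a ∈ Γ1 ∧ b ∈ Γ2 then Sum.inl (c a b) :: pcE Γ1 Γ2 c l
    else Sum.inl a :: pcE Γ1 Γ2 c (Sum.inl b :: l)
  | s :: l => s :: pcE Γ1 Γ2 c l

lemma pc_append {σ : Type*} [DecidableEq σ] (Γ1 Γ2 : Finset σ) (c : σ → σ → σ)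
    (l2 : List σ) (l1 : List σ) (h1 : l1 ≠ [])
    (hj : ∀ a b, l1.getLast? = some a → l2.head? = some b → ¬(a ∈ Γ1 ∧ b ∈ Γ2)) :
    pc Γ1 Γ2 c (l1 ++ l2) = pc Γ1 Γ2 c l1 ++ pc Γ1 Γ2 c l2 := by
  induction l1 using pc.induct (Γ1 := Γ1) (Γ2 := Γ2) with
  | case1 => exact absurd rfl h1
  | case2 a =>
    cases l2 with
    | nil => simp [pc]
    | cons b l2' =>
      have hnp := hj a b (by simp) (by simp)
      simp [pc, hnp]
  | case3 a b l hab ih =>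
    cases l with
    | nil => simp [pc, hab]
    | cons t l' =>
      have step : pc Γ1 Γ2 c ((a :: b :: t :: l') ++ l2)
          = c a b :: pc Γ1 Γ2 c ((t :: l') ++ l2) := by
        simp only [List.cons_append, pc, if_pos hab]
      rw [step, ih (by simp)
        (fun a' b' hl hh => hj a' b'
          (by rwa [List.getLast?_cons_cons, List.getLast?_cons_cons]) hh)]
      simp only [pc, if_pos hab, List.cons_append]
  | case4 a b l hab ih =>
    have step : pc Γ1 Γ2 c ((a :: b :: l) ++ l2)
        = a :: pc Γ1 Γ2 c ((b :: l) ++ l2) := by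
      simp only [List.cons_append, pc, if_neg hab]
    rw [step, ih (by simp)
      (fun a' b' hl hh => hj a' b' (by rwa [List.getLast?_cons_cons]) hh)]
    simp only [pc, if_neg hab, List.cons_append]

lemma seg_ne_nil {σ V : Type*} (S : V → List σ) (hne : ∀ x : V, S x ≠ [])
    (s : σ ⊕ V) : seg S s ≠ [] := by
  cases s with
  | inl a => simp [seg]
  | inr x => exact hne x

lemma subst_cons {σ V : Type*} (S : V → List σ) (t : σ ⊕ V) (l : List (σ ⊕ V)) :
    subst S (t :: l) = seg S t ++ subst S l := by
  simp [subst]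

lemma subst_head? {σ V : Type*} (S : V → List σ) (hne : ∀ x : V, S x ≠ [])
    (t : σ ⊕ V) (l : List (σ ⊕ V)) :
    (subst S (t :: l)).head? = (seg S t).head? := by
  rw [subst_cons]
  cases h : seg S t with
  | nil => exact absurd h (seg_ne_nil S hne t)
  | cons a l' => simp


/-- if all variable images are nonempty and no occurrence of a factor
`ab` (`a ∈ Γ₁`, `b ∈ Γ₂`) in `S(u)` is crossing — i.e. along `u` every pair of
adjacent symbols either consists of two explicit letters, or does not produce a
`Γ₁Γ₂`-pair at the junction of their images — then pair compression commutes with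
substitution: `h(S(u)) = S'(h(u))` where `S'(x) = h(S(x))` and `h(u)` compresses only
the explicit letters of `u`. -/
theorem stmt_9 {σ V : Type*} [DecidableEq σ] (Γ1 Γ2 : Finset σ) (c : σ → σ → σ)
    (hd : Disjoint Γ1 Γ2) (S : V → List σ) (u : List (σ ⊕ V))
    (hne : ∀ x : V, S x ≠ [])
    (hnc : List.Chain'
      (fun s t => (∃ a b : σ, s = Sum.inl a ∧ t = Sum.inl b) ∨
        ∀ a b : σ, (seg S s).getLast? = some a → (seg S t).head? = some b →
          ¬(a ∈ Γ1 ∧ b ∈ Γ2)) u) :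
    pc Γ1 Γ2 c (subst S u) = subst (fun x => pc Γ1 Γ2 c (S x)) (pcE Γ1 Γ2 c u) := by
  induction u using pcE.induct (Γ1 := Γ1) (Γ2 := Γ2) with
  | case1 => simp [subst, pcE, pc]
  | case2 a b l hab ih =>
    have h1 : subst S (Sum.inl a :: Sum.inl b :: l) = a :: b :: subst S l := by
      simp [subst, seg]
    rw [h1]
    have h2 : pc Γ1 Γ2 c (a :: b :: subst S l) = c a b :: pc Γ1 Γ2 c (subst S l) := by
      simp only [pc, if_pos hab]
    rw [h2, ih hnc.tail.tail]
    simp only [pcE, if_pos hab, subst_cons, seg]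
    rfl
  | case3 a b l hab ih =>
    have h1 : subst S (Sum.inl a :: Sum.inl b :: l) = a :: subst S (Sum.inl b :: l) := by
      simp [subst, seg]
    rw [h1]
    have h2 : pc Γ1 Γ2 c (a :: subst S (Sum.inl b :: l))
        = a :: pc Γ1 Γ2 c (subst S (Sum.inl b :: l)) := by
      rw [subst_cons]
      have : seg S (Sum.inl b) = [b] := rfl
      rw [this]
      cases hl : subst S l with
      | nil => simp [pc, hab]
      | cons t l' => simp only [List.cons_append, pc, if_neg hab]
    rw [h2, ih hnc.tail]
    simp only [pcE, if_neg hab, subst_cons, seg]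
    rfl
  | case4 s l hex ih =>
    rw [subst_cons]
    have hsplit : pc Γ1 Γ2 c (seg S s ++ subst S l)
        = pc Γ1 Γ2 c (seg S s) ++ pc Γ1 Γ2 c (subst S l) := by
      apply pc_append _ _ _ _ _ (seg_ne_nil S hne s)
      intro a b hla hhb hab
      cases l with
      | nil => simp [subst] at hhb
      | cons t l' =>
        rw [subst_head? S hne] at hhb
        rcases hnc.rel_head with hcase | hcase
        · obtain ⟨a', b', hs, ht⟩ := hcase
          exact hex a' b' l' hs (by rw [ht])
        · exact hcase a b hla hhb hab
    rw [hsplit, ih hnc.tail]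
    have hpcE : pcE Γ1 Γ2 c (s :: l) = s :: pcE Γ1 Γ2 c l := by
      cases s with
      | inl a =>
        cases l with
        | nil => rfl
        | cons t l' =>
          cases t with
          | inl b => exact absurd rfl (hex a b l' rfl)
          | inr x => rfl
      | inr x => rfl
    rw [hpcE, subst_cons]
    congr 1
    cases s with
    | inl a => simp [seg, pc]
    | inr x => rfl
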